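/- Let M be a metric space with base point 0 and let μ ∈ F(M) with ‖μ‖ = 1 be such that for every ε > 0 and every slice S = S(f, α) := { ν ∈ B_{F(M)} : f(ν) > 1 − α } (f ∈ S_{Lip₀(M)}, α > 0) containing μ, there exist u ≠ v ∈ M with m_{uv} ∈ S and d(u,v) < ε. Then μ is a Δ-point: for every slice S of B_{F(M)} containing μ and every ε > 0 there exists ν ∈ S with ‖μ − ν‖ ≥ 2 − ε. -/

import Mathlib

/-- An abstract characterization of the Lipschitz-free space `F(M)` over a pointed
metric space `(M, base)`: a normed space `X` together with a map `δ : M → X`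
(the canonical embedding) such that `δ base = 0`, the span of `δ(M)` is dense,
every `1`-Lipschitz function vanishing at the base point extends to a functional of
norm at most one, and every functional of norm at most one induces a `1`-Lipschitz
function on `M`. These properties determine `F(M)` up to isometric isomorphism. -/
structure IsLipschitzFreeSpace (M : Type*) [MetricSpace M] (base : M)
    (X : Type*) [NormedAddCommGroup X] [NormedSpace ℝ X] (δ : M → X) : Prop where
  map_base : δ base = 0
  dense_span : (Submodule.span ℝ (Set.range δ)).topologicalClosure = ⊤
  extend_lipschitz : ∀ g : M → ℝ, LipschitzWith 1 g → g base = 0 →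
    ∃ φ : X →L[ℝ] ℝ, ‖φ‖ ≤ 1 ∧ ∀ p, φ (δ p) = g p
  lipschitz_of_dual : ∀ φ : X →L[ℝ] ℝ, ‖φ‖ ≤ 1 →
    LipschitzWith 1 (fun p => φ (δ p))

/-- The molecule `m_{xy} = (δ_x - δ_y) / d(x,y)`. -/
noncomputable def molecule {M : Type*} [MetricSpace M]
    {X : Type*} [NormedAddCommGroup X] [NormedSpace ℝ X]
    (δ : M → X) (x y : M) : X :=
  (dist x y)⁻¹ • (δ x - δ y)

/-- `μ` is a Daugavet-point: every slice `S(f,α)` of the unit ball contains, for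
every `ε > 0`, an element at distance at least `2 - ε` from `μ`. -/
def IsDaugavetPoint {X : Type*} [NormedAddCommGroup X] [NormedSpace ℝ X]
    (μ : X) : Prop :=
  ∀ f : X →L[ℝ] ℝ, ‖f‖ = 1 → ∀ α : ℝ, 0 < α → ∀ ε : ℝ, 0 < ε →
    ∃ ν : X, ‖ν‖ ≤ 1 ∧ f ν > 1 - α ∧ 2 - ε ≤ ‖μ - ν‖

/-- `μ` is a Δ-point: every slice `S(f,α)` of the unit ball containing `μ`
contains, for every `ε > 0`, an element at distance at least `2 - ε` from `μ`. -/
def IsDeltaPoint {X : Type*} [NormedAddCommGroup X] [NormedSpace ℝ X]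
    (μ : X) : Prop :=
  ∀ f : X →L[ℝ] ℝ, ‖f‖ = 1 → ∀ α : ℝ, 0 < α → f μ > 1 - α →
    ∀ ε : ℝ, 0 < ε → ∃ ν : X, ‖ν‖ ≤ 1 ∧ f ν > 1 - α ∧ 2 - ε ≤ ‖μ - ν‖

/-- `ν` is a denting point of the unit ball: `‖ν‖ ≤ 1` and `ν` belongs to slices of
the unit ball of arbitrarily small diameter. -/
def IsDentingPoint {X : Type*} [NormedAddCommGroup X] [NormedSpace ℝ X]
    (ν : X) : Prop :=
  ‖ν‖ ≤ 1 ∧ ∀ ε : ℝ, 0 < ε → ∃ f : X →L[ℝ] ℝ, ∃ α : ℝ, ‖f‖ = 1 ∧ 0 < α ∧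
    f ν > 1 - α ∧ ∀ w w' : X, ‖w‖ ≤ 1 → f w > 1 - α → ‖w'‖ ≤ 1 → f w' > 1 - α →
      ‖w - w'‖ < ε

/-- Proposition 4.1: if every slice of the unit ball of `F(M)`
containing `μ` contains molecules `m_{uv}` with `d(u,v)` arbitrarily small, then
`μ` is a Δ-point. -/
theorem stmt16 {M : Type*} [MetricSpace M] (base : M)
    {X : Type*} [NormedAddCommGroup X] [NormedSpace ℝ X] (δ : M → X)
    (hfree : IsLipschitzFreeSpace M base X δ)
    (μ : X) (hμ : ‖μ‖ = 1)
    (hslice : ∀ ε : ℝ, 0 < ε → ∀ f : X →L[ℝ] ℝ, ‖f‖ = 1 →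
      ∀ α : ℝ, 0 < α → f μ > 1 - α →
        ∃ u v : M, u ≠ v ∧ ‖molecule δ u v‖ ≤ 1 ∧
          f (molecule δ u v) > 1 - α ∧ dist u v < ε) :
    IsDeltaPoint μ := by
  intro f hf α hα hfμ ε hε
  have hμ0 : μ ≠ 0 := by
    intro h; rw [h, norm_zero] at hμ; norm_num at hμ
  -- approximate μ by an element of the span
  have hcl : μ ∈ closure ((Submodule.span ℝ (Set.range δ)) : Set X) := by
    have : μ ∈ (Submodule.span ℝ (Set.range δ)).topologicalClosure := by
      rw [hfree.dense_span]; trivial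
    exact this
  obtain ⟨μ₀, hμ₀mem, hμ₀d⟩ := Metric.mem_closure_iff.mp hcl (ε/8) (by positivity)
  rw [dist_eq_norm] at hμ₀d
  obtain ⟨c, hc⟩ := Finsupp.mem_span_range_iff_exists_finsupp.mp hμ₀mem
  set C : ℝ := ∑ p ∈ c.support, |c p| with hCdef
  have hC0 : 0 ≤ C := Finset.sum_nonneg fun p _ => abs_nonneg _
  -- norming functional for μ
  obtain ⟨F, hF1, hFμ⟩ := exists_dual_vector ℝ μ (norm_ne_zero_iff.mpr hμ0)
  set ft : M → ℝ := fun p => F (δ p) with hftdef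
  have hlipft : LipschitzWith 1 ft := hfree.lipschitz_of_dual F hF1.le
  have hftdist : ∀ p q : M, |ft p - ft q| ≤ dist p q := by
    intro p q
    have := hlipft.dist_le_mul p q
    rwa [Real.dist_eq, NNReal.coe_one, one_mul] at this
  set δ₀ : ℝ := ε / (8 * (C + 1)) with hδ₀def
  have hδ₀ : 0 < δ₀ := by positivity
  obtain ⟨u, v, huv, hm1, hfm, hd⟩ := hslice δ₀ hδ₀ f hf α hα hfμ
  refine ⟨molecule δ u v, hm1, hfm, ?_⟩
  -- build the auxiliary functional φ
  set t : ℝ := dist u v with htdef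
  have ht0 : 0 < t := dist_pos.mpr huv
  set h : M → ℝ := fun p => min (ft p) (ft u - 2*t + dist p u) with hhdef
  have hliph : LipschitzWith 1 h := by
    have h2 : LipschitzWith 1 fun p : M => ft u - 2*t + dist p u := by
      have := (LipschitzWith.const (α := M) (ft u - 2*t)).add
        (LipschitzWith.dist_right u)
      simpa [dist_comm] using this
    simpa using hlipft.min h2
  set g : M → ℝ := fun p => h p - h base with hgdef
  have hlipg : LipschitzWith 1 g := fun p q => by
    simpa [hgdef, edist_sub_right] using hliph p q
  have hg0 : g base = 0 := by simp [hgdef]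
  obtain ⟨φ, hφ1, hφδ⟩ := hfree.extend_lipschitz g hlipg hg0
  -- bounds on h and g
  have hub : ∀ p, h p ≤ ft p := fun p => min_le_left _ _
  have hlb : ∀ p, ft p - 2*t ≤ h p := by
    intro p
    refine le_min (by linarith [ht0.le]) ?_
    have := hftdist p u
    have : ft p - ft u ≤ dist p u := (abs_le.mp this).2
    linarith
  have hgft : ∀ p, |g p - ft p| ≤ 2*t := by
    intro p
    have h1 := hub p; have h2 := hlb p
    have h3 := hub base; have h4 := hlb base
    have hftb : ft base = 0 := by
      simp [hftdef, hfree.map_base]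
    rw [abs_le]
    constructor <;> simp only [hgdef] <;> nlinarith
  -- φ on the molecule equals -1
  have hφmol : φ (molecule δ u v) = -1 := by
    have hhu : h u = ft u - 2*t := by
      simp only [hhdef]
      rw [dist_self, add_zero, min_eq_right (by linarith [ht0.le])]
    have hhv : h v = ft u - t := by
      have h1 : ft u - 2*t + dist v u = ft u - t := by
        rw [dist_comm v u, ← htdef]; ring
      have h2 : ft u - t ≤ ft v := by
        have := (abs_le.mp (hftdist u v)).2
        linarith
      simp only [hhdef]
      rw [h1, min_eq_right h2]
    have : φ (molecule δ u v) = t⁻¹ * (g u - g v) := by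
      simp [molecule, ← htdef, map_sub, hφδ]
    rw [this]
    have : g u - g v = -t := by simp [hgdef, hhu, hhv]; ring
    rw [this]
    field_simp
  -- φ μ₀ is close to F μ₀
  have hφμ₀ : |φ μ₀ - F μ₀| ≤ 2*t*C := by
    have hφs : φ μ₀ = ∑ p ∈ c.support, c p * g p := by
      rw [← hc, Finsupp.sum, map_sum]
      exact Finset.sum_congr rfl fun p _ => by rw [map_smul, hφδ]; simp
    have hFs : F μ₀ = ∑ p ∈ c.support, c p * ft p := by
      rw [← hc, Finsupp.sum, map_sum]
      exact Finset.sum_congr rfl fun p _ => by rw [map_smul]; simp [hftdef]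
    rw [hφs, hFs, ← Finset.sum_sub_distrib]
    calc |∑ p ∈ c.support, (c p * g p - c p * ft p)|
        ≤ ∑ p ∈ c.support, |c p * g p - c p * ft p| := Finset.abs_sum_le_sum_abs _ _
      _ ≤ ∑ p ∈ c.support, |c p| * (2*t) := by
          refine Finset.sum_le_sum fun p _ => ?_
          rw [← mul_sub, abs_mul]
          exact mul_le_mul_of_nonneg_left (hgft p) (abs_nonneg _)
      _ = 2*t*C := by rw [← Finset.sum_mul, hCdef]; ring
  -- F μ₀ is close to 1
  have hFμ₀ : (1 : ℝ) - ε/8 ≤ F μ₀ := by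
    have h1 : F μ - F μ₀ ≤ ‖μ - μ₀‖ := by
      calc F μ - F μ₀ = F (μ - μ₀) := by rw [map_sub]
        _ ≤ |F (μ - μ₀)| := le_abs_self _
        _ ≤ ‖F‖ * ‖μ - μ₀‖ := F.le_opNorm _
        _ = ‖μ - μ₀‖ := by rw [hF1, one_mul]
    have h2 : F μ = 1 := by rw [hFμ, hμ]; norm_num
    linarith
  -- φ μ is close to 1
  have htC : 2*t*C ≤ ε/4 := by
    have h1 : t < δ₀ := hd
    have h2 : 2*t*C ≤ 2*δ₀*(C+1) := by nlinarith
    have h3 : 2*δ₀*(C+1) = ε/4 := by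
      rw [hδ₀def]; field_simp; ring
    linarith
  have hφμ : (1 : ℝ) - ε/2 ≤ φ μ := by
    have h1 : φ μ₀ - φ μ ≤ ‖μ - μ₀‖ := by
      calc φ μ₀ - φ μ = φ (μ₀ - μ) := by rw [map_sub]
        _ ≤ |φ (μ₀ - μ)| := le_abs_self _
        _ ≤ ‖φ‖ * ‖μ₀ - μ‖ := φ.le_opNorm _
        _ ≤ 1 * ‖μ₀ - μ‖ := by
            exact mul_le_mul_of_nonneg_right hφ1 (norm_nonneg _)
        _ = ‖μ - μ₀‖ := by rw [one_mul, norm_sub_rev]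
    have h2 := (abs_le.mp hφμ₀).1
    linarith
  -- conclude
  have hfinal : 2 - ε ≤ φ (μ - molecule δ u v) := by
    rw [map_sub, hφmol]
    linarith
  calc (2:ℝ) - ε ≤ φ (μ - molecule δ u v) := hfinal
    _ ≤ |φ (μ - molecule δ u v)| := le_abs_self _
    _ ≤ ‖φ‖ * ‖μ - molecule δ u v‖ := φ.le_opNorm _
    _ ≤ 1 * ‖μ - molecule δ u v‖ :=
        mul_le_mul_of_nonneg_right hφ1 (norm_nonneg _)
    _ = ‖μ - molecule δ u v‖ := one_mul _
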